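/- Fix vectors α_0,…,α_n in a finite-dimensional real inner product space E, and for each nonzero x ∈ ℂ^{n+1} let β(x) denote the unique point of the convex hull of {α_j : x_j ≠ 0} closest to the origin. Then the function x ↦ ‖β(x)‖ is upper semicontinuous on ℂ^{n+1} \ {0}; equivalently, for every real number c the set {x ∈ ℂ^{n+1} \ {0} : ‖β(x)‖ ≥ c} is closed in ℂ^{n+1} \ {0}. -/

import Mathlib

/-- Fix vectors α_0,…,α_n in a finite-dimensional real inner product space E, and for each
nonzero x ∈ ℂ^{n+1} let β(x) be the unique point of the convex hull of {α_j : x_j ≠ 0}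
closest to the origin. Then x ↦ ‖β(x)‖ is upper semicontinuous on ℂ^{n+1} \ {0};
equivalently, for every c the set {x ≠ 0 : ‖β(x)‖ ≥ c} is closed in ℂ^{n+1} \ {0}. -/
theorem stmt_4 {E : Type*} [NormedAddCommGroup E] [InnerProductSpace ℝ E]
    [FiniteDimensional ℝ E] (n : ℕ) (α : Fin (n + 1) → E)
    (β : (Fin (n + 1) → ℂ) → E)
    (hβ : ∀ x : Fin (n + 1) → ℂ, x ≠ 0 →
      β x ∈ convexHull ℝ (α '' {j | x j ≠ 0}) ∧
      ∀ y ∈ convexHull ℝ (α '' {j | x j ≠ 0}), ‖β x‖ ≤ ‖y‖) :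
    UpperSemicontinuousOn (fun x => ‖β x‖) {x : Fin (n + 1) → ℂ | x ≠ 0} ∧
    ∀ c : ℝ, IsClosed {x : {y : Fin (n + 1) → ℂ // y ≠ 0} | c ≤ ‖β x.1‖} := by
  have key : ∀ x : Fin (n + 1) → ℂ, x ≠ 0 → ∃ U : Set (Fin (n + 1) → ℂ),
      IsOpen U ∧ x ∈ U ∧ ∀ y ∈ U, y ≠ 0 → ‖β y‖ ≤ ‖β x‖ := by
    intro x hx
    refine ⟨⋂ j : Fin (n + 1), {y | x j ≠ 0 → y j ≠ 0}, ?_, ?_, ?_⟩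
    · apply isOpen_iInter_of_finite
      intro j
      by_cases h : x j = 0
      · simp [h]
      · have heq : {y : Fin (n + 1) → ℂ | x j ≠ 0 → y j ≠ 0}
            = (fun y : Fin (n + 1) → ℂ => y j) ⁻¹' {0}ᶜ := by
          ext y; simp [h]
        rw [heq]
        exact isOpen_compl_singleton.preimage (continuous_apply j)
    · simp only [Set.mem_iInter, Set.mem_setOf_eq]
      exact fun j h => h
    · intro y hy hy0
      have hsub : {j | x j ≠ 0} ⊆ {j | y j ≠ 0} := by
        intro j hj
        exact (Set.mem_iInter.mp hy j) hj
      have h1 := hβ x hx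
      have h2 := hβ y hy0
      exact h2.2 (β x) (convexHull_mono (Set.image_mono hsub) h1.1)
  constructor
  · intro x hx c hc
    obtain ⟨U, hUo, hxU, hU⟩ := key x hx
    filter_upwards [nhdsWithin_le_nhds (hUo.mem_nhds hxU), self_mem_nhdsWithin]
      with y hyU hys
    exact lt_of_le_of_lt (hU y hyU hys) hc
  · intro c
    rw [← isOpen_compl_iff, isOpen_iff_mem_nhds]
    rintro ⟨x, hx⟩ hmem
    simp only [Set.mem_compl_iff, Set.mem_setOf_eq, not_le] at hmem
    obtain ⟨U, hUo, hxU, hU⟩ := key x hx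
    have hnb : Subtype.val ⁻¹' U ∈ nhds (⟨x, hx⟩ : {y : Fin (n + 1) → ℂ // y ≠ 0}) :=
      (hUo.preimage continuous_subtype_val).mem_nhds hxU
    filter_upwards [hnb] with y hyU
    simp only [Set.mem_compl_iff, Set.mem_setOf_eq, not_le]
    exact lt_of_le_of_lt (hU y.1 hyU y.2) hmem
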